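/- Let G be a k×k symmetric positive definite matrix with nonnegative entries, and let t ∈ R^k be a vector with w := G^{-1} t entrywise strictly positive. Then the matrix T = G^{-1} − diag(w ⊘ (G w)) is positive semidefinite, where ⊘ denotes entrywise division. -/

import Mathlib

open Matrix

/-- Swap lemma for symmetric matrices: `x ⬝ᵥ A *ᵥ y = y ⬝ᵥ A *ᵥ x`. -/
lemma dotProduct_mulVec_symm {k : ℕ} (A : Matrix (Fin k) (Fin k) ℝ)
    (hA : A.IsSymm) (x y : Fin k → ℝ) : x ⬝ᵥ A *ᵥ y = y ⬝ᵥ A *ᵥ x := by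
  rw [dotProduct_mulVec, ← vecMul_transpose, hA.eq, dotProduct_comm]

/-- If `G` is symmetric positive definite with nonnegative entries and
`w = G⁻¹ t` is entrywise positive, then `T = G⁻¹ - diag(w ⊘ (G w))` is
positive semidefinite. -/
theorem stmt_4 {k : ℕ} (G : Matrix (Fin k) (Fin k) ℝ)
    (hsymm : G.IsSymm) (hpd : G.PosDef) (hnonneg : ∀ i j, 0 ≤ G i j)
    (t : Fin k → ℝ) (hw : ∀ i, 0 < (G⁻¹.mulVec t) i) :
    (G⁻¹ - Matrix.diagonal (fun i =>
      (G⁻¹.mulVec t) i / (G.mulVec (G⁻¹.mulVec t)) i)).PosSemidef := by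
  set w : Fin k → ℝ := G⁻¹.mulVec t with hwdef
  have hunit : IsUnit G.det := hpd.det_pos.ne'.isUnit
  have hGw : G.mulVec w = t := by
    rw [hwdef, Matrix.mulVec_mulVec, Matrix.mul_nonsing_inv G hunit, Matrix.one_mulVec]
  have hwpos : ∀ i, 0 < w i := hw
  -- diagonal entries of G are positive
  have hdiag : ∀ i, 0 < G i i := fun i => by
    have := hpd.dotProduct_mulVec_pos (x := Pi.single i 1) (by
      intro h
      have := congrFun h i
      simp at this)
    simpa using this
  -- entries of t = G w are positive
  have ht : ∀ i, 0 < t i := fun i => by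
    have h1 : t i = ∑ j, G i j * w j := by
      rw [← hGw]; rfl
    have h2 : G i i * w i ≤ ∑ j, G i j * w j :=
      Finset.single_le_sum (fun j _ => mul_nonneg (hnonneg i j) (hwpos j).le)
        (Finset.mem_univ i)
    have h3 : 0 < G i i * w i := mul_pos (hdiag i) (hwpos i)
    rw [h1]; linarith
  have hsym' : ∀ i j, G j i = G i j := fun i j => by
    have := congrFun (congrFun hsymm.eq i) j
    simpa [Matrix.transpose_apply] using this
  -- key inequality : y ⬝ᵥ G *ᵥ y ≤ ∑ i, t i / w i * (y i)^2
  have key : ∀ y : Fin k → ℝ, y ⬝ᵥ G *ᵥ y ≤ ∑ i, t i / w i * (y i) ^ 2 := by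
    intro y
    have expand : ∀ i j, G i j * w i * w j * (y i / w i - y j / w j) ^ 2
        = G i j * w j / w i * y i ^ 2 + G i j * w i / w j * y j ^ 2
          - 2 * (G i j * (y i * y j)) := by
      intro i j
      have hi := (hwpos i).ne'
      have hj := (hwpos j).ne'
      field_simp
      ring
    have hnn : 0 ≤ ∑ i, ∑ j, G i j * w i * w j * (y i / w i - y j / w j) ^ 2 := by
      refine Finset.sum_nonneg fun i _ => Finset.sum_nonneg fun j _ => ?_
      exact mul_nonneg (mul_nonneg (mul_nonneg (hnonneg i j) (hwpos i).le) (hwpos j).le)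
        (sq_nonneg _)
    have hsum : ∑ i, ∑ j, G i j * w i * w j * (y i / w i - y j / w j) ^ 2
        = (∑ i, ∑ j, G i j * w j / w i * y i ^ 2)
          + (∑ i, ∑ j, G i j * w i / w j * y j ^ 2)
          - 2 * ∑ i, ∑ j, G i j * (y i * y j) := by
      simp only [expand, Finset.sum_add_distrib, Finset.sum_sub_distrib, Finset.mul_sum]
    have hswap : (∑ i, ∑ j, G i j * w i / w j * y j ^ 2)
        = ∑ i, ∑ j, G i j * w j / w i * y i ^ 2 := by
      rw [Finset.sum_comm]
      refine Finset.sum_congr rfl fun j _ => Finset.sum_congr rfl fun i _ => ?_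
      rw [hsym' j i]
    have hA : (∑ i, t i / w i * (y i) ^ 2) = ∑ i, ∑ j, G i j * w j / w i * y i ^ 2 := by
      refine Finset.sum_congr rfl fun i _ => ?_
      have h1 : t i = ∑ j, G i j * w j := by rw [← hGw]; rfl
      rw [h1, Finset.sum_div, Finset.sum_mul]
    have hB : y ⬝ᵥ G *ᵥ y = ∑ i, ∑ j, G i j * (y i * y j) := by
      simp only [dotProduct, Matrix.mulVec, dotProduct, Finset.mul_sum]
      refine Finset.sum_congr rfl fun i _ => Finset.sum_congr rfl fun j _ => ?_
      ring
    rw [hA, hB]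
    rw [hsum, hswap] at hnn
    linarith
  -- final argument
  have hinv : G⁻¹.PosDef := hpd.inv
  have hinvsymm : G⁻¹.IsSymm := by
    unfold Matrix.IsSymm
    rw [Matrix.transpose_nonsing_inv, hsymm.eq]
  refine Matrix.PosSemidef.of_dotProduct_mulVec_nonneg ?_ ?_
  · exact hinv.1.sub (Matrix.isHermitian_diagonal _)
  · intro x
    simp only [star_trivial]
    have hDx : (Matrix.diagonal (fun i => w i / (G.mulVec w) i)) *ᵥ x
        = fun i => w i / t i * x i := by
      funext i
      rw [Matrix.mulVec_diagonal, hGw]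
    set y : Fin k → ℝ := fun i => w i / t i * x i with hy
    set S : ℝ := ∑ i, w i / t i * x i ^ 2 with hS
    -- x ⬝ᵥ y = S
    have hxy : x ⬝ᵥ y = S := by
      refine Finset.sum_congr rfl fun i _ => ?_
      simp [hy]; ring
    -- ∑ t i / w i * y i ^ 2 = S
    have hyS : ∑ i, t i / w i * (y i) ^ 2 = S := by
      refine Finset.sum_congr rfl fun i _ => ?_
      have hti := (ht i).ne'
      have hwi := (hwpos i).ne'
      simp only [hy]
      field_simp
    -- variational inequality: S ≤ x ⬝ᵥ G⁻¹ *ᵥ x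
    have hz : G⁻¹ *ᵥ (G *ᵥ y) = y := by
      rw [Matrix.mulVec_mulVec, Matrix.nonsing_inv_mul G hunit, Matrix.one_mulVec]
    set z : Fin k → ℝ := x - G *ᵥ y with hzdef
    have hzexp : z ⬝ᵥ G⁻¹ *ᵥ z = x ⬝ᵥ G⁻¹ *ᵥ x - 2 * (x ⬝ᵥ y) + y ⬝ᵥ G *ᵥ y := by
      have h1 : (G *ᵥ y) ⬝ᵥ G⁻¹ *ᵥ x = x ⬝ᵥ y := by
        rw [dotProduct_mulVec_symm G⁻¹ hinvsymm, hz]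
      have h2 : (G *ᵥ y) ⬝ᵥ y = y ⬝ᵥ G *ᵥ y := dotProduct_comm _ _
      rw [hzdef, Matrix.mulVec_sub, hz, sub_dotProduct, dotProduct_sub,
        dotProduct_sub, h1, h2]
      ring
    have hznn : 0 ≤ z ⬝ᵥ G⁻¹ *ᵥ z := by
      simpa using hinv.posSemidef.dotProduct_mulVec_nonneg z
    have hkey := key y
    rw [hyS] at hkey
    rw [hzexp, hxy] at hznn
    -- conclude
    have hfinal : S ≤ x ⬝ᵥ G⁻¹ *ᵥ x := by linarith
    rw [Matrix.sub_mulVec, dotProduct_sub]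
    have hDxx : x ⬝ᵥ (Matrix.diagonal (fun i =>
        (G⁻¹.mulVec t) i / (G.mulVec (G⁻¹.mulVec t)) i)) *ᵥ x = S := by
      rw [show (fun i => (G⁻¹.mulVec t) i / (G.mulVec (G⁻¹.mulVec t)) i)
          = fun i => w i / (G.mulVec w) i from rfl, hDx, ← hxy]
    rw [hDxx]
    linarith
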